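/- If (y_s) and (z_s) are increasing sequences of rationals converging to g and h, and u_s = y_s - z_s, then ∑_{s=0}^∞ |u_{s+1} - u_s| ≤ (g - y_0) + (h - z_0). Conversely, if (u_s) is a sequence of rationals with ∑_{s=0}^∞ |u_{s+1} - u_s| ≤ c, then the sequences y_s = u_0 + ∑_{i=0}^{s}(u_{i+1} ∸ u_i) and z_s = ∑_{i=0}^{s}(u_i ∸ u_{i+1}) are increasing, bounded above by u_0 + c and c respectively, and satisfy u_{s+1} = y_s - z_s for all s. -/

import Mathlib

open Filter Topology

theorem stmt11 :
    (∀ (y z : ℕ → ℚ) (g h : ℝ), Monotone y → Monotone z →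
      Tendsto (fun s => (y s : ℝ)) atTop (𝓝 g) →
      Tendsto (fun s => (z s : ℝ)) atTop (𝓝 h) →
      Summable (fun s : ℕ => |((((y (s + 1) - z (s + 1)) - (y s - z s)) : ℚ) : ℝ)|) ∧
      (∑' s : ℕ, |((((y (s + 1) - z (s + 1)) - (y s - z s)) : ℚ) : ℝ)|) ≤
        (g - (y 0 : ℝ)) + (h - (z 0 : ℝ))) ∧
    (∀ (u : ℕ → ℚ) (c : ℝ),
      (∀ N : ℕ, (∑ s ∈ Finset.range N, |(u (s + 1) : ℝ) - (u s : ℝ)|) ≤ c) →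
      Monotone (fun s : ℕ => u 0 + ∑ i ∈ Finset.range (s + 1), max (u (i + 1) - u i) 0) ∧
      Monotone (fun s : ℕ => ∑ i ∈ Finset.range (s + 1), max (u i - u (i + 1)) 0) ∧
      (∀ s : ℕ, ((u 0 + ∑ i ∈ Finset.range (s + 1), max (u (i + 1) - u i) 0 : ℚ) : ℝ) ≤
        (u 0 : ℝ) + c) ∧
      (∀ s : ℕ, ((∑ i ∈ Finset.range (s + 1), max (u i - u (i + 1)) 0 : ℚ) : ℝ) ≤ c) ∧
      (∀ s : ℕ, u (s + 1) =
        (u 0 + ∑ i ∈ Finset.range (s + 1), max (u (i + 1) - u i) 0) -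
        ∑ i ∈ Finset.range (s + 1), max (u i - u (i + 1)) 0)) := by
  constructor
  · intro y z g h hy hz hty htz
    have hyle : ∀ n, (y n : ℝ) ≤ g := fun n =>
      Monotone.ge_of_tendsto (fun a b hab => by exact_mod_cast hy hab) hty n
    have hzle : ∀ n, (z n : ℝ) ≤ h := fun n =>
      Monotone.ge_of_tendsto (fun a b hab => by exact_mod_cast hz hab) htz n
    have hbound : ∀ N : ℕ,
        (∑ s ∈ Finset.range N, |((((y (s + 1) - z (s + 1)) - (y s - z s)) : ℚ) : ℝ)|) ≤
        (g - (y 0 : ℝ)) + (h - (z 0 : ℝ)) := by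
      intro N
      have h1 : ∀ s : ℕ, |((((y (s + 1) - z (s + 1)) - (y s - z s)) : ℚ) : ℝ)| ≤
          ((y (s + 1) : ℝ) - y s) + ((z (s + 1) : ℝ) - z s) := by
        intro s
        have hys : (y s : ℝ) ≤ y (s + 1) := by exact_mod_cast hy (Nat.le_succ s)
        have hzs : (z s : ℝ) ≤ z (s + 1) := by exact_mod_cast hz (Nat.le_succ s)
        push_cast
        rw [abs_le]
        constructor <;> nlinarith
      calc (∑ s ∈ Finset.range N, |((((y (s + 1) - z (s + 1)) - (y s - z s)) : ℚ) : ℝ)|)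
          ≤ ∑ s ∈ Finset.range N, (((y (s + 1) : ℝ) - y s) + ((z (s + 1) : ℝ) - z s)) :=
            Finset.sum_le_sum fun s _ => h1 s
        _ = ((y N : ℝ) - y 0) + ((z N : ℝ) - z 0) := by
            rw [Finset.sum_add_distrib,
              Finset.sum_range_sub (f := fun i => (y i : ℝ)),
              Finset.sum_range_sub (f := fun i => (z i : ℝ))]
        _ ≤ (g - (y 0 : ℝ)) + (h - (z 0 : ℝ)) := by
            have := hyle N; have := hzle N; linarith
    have hs : Summable (fun s : ℕ => |((((y (s + 1) - z (s + 1)) - (y s - z s)) : ℚ) : ℝ)|) :=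
      summable_of_sum_range_le (fun n => abs_nonneg _) hbound
    exact ⟨hs, Summable.tsum_le_of_sum_range_le hs hbound⟩
  · intro u c hc
    have hle : ∀ s : ℕ,
        (∑ i ∈ Finset.range (s + 1), max (u (i + 1) - u i) 0 : ℚ) ≤
          ∑ i ∈ Finset.range (s + 1), |u (i + 1) - u i| ∧
        (∑ i ∈ Finset.range (s + 1), max (u i - u (i + 1)) 0 : ℚ) ≤
          ∑ i ∈ Finset.range (s + 1), |u (i + 1) - u i| := by
      intro s
      constructor <;> refine Finset.sum_le_sum fun i _ => ?_
      · exact max_le (le_abs_self _) (abs_nonneg _)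
      · rw [abs_sub_comm]; exact max_le (le_abs_self _) (abs_nonneg _)
    have habs : ∀ s : ℕ, ((∑ i ∈ Finset.range (s + 1), |u (i + 1) - u i| : ℚ) : ℝ) ≤ c := by
      intro s
      push_cast
      exact hc (s + 1)
    refine ⟨?_, ?_, ?_, ?_, ?_⟩
    · refine monotone_nat_of_le_succ fun n => ?_
      exact add_le_add_right (Finset.sum_le_sum_of_subset_of_nonneg
        (Finset.range_subset_range.2 (by omega)) (fun i _ _ => le_max_right _ _)) _
    · refine monotone_nat_of_le_succ fun n => ?_
      exact Finset.sum_le_sum_of_subset_of_nonneg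
        (Finset.range_subset_range.2 (by omega)) (fun i _ _ => le_max_right _ _)
    · intro s
      have h1 := (hle s).1
      have h2 := habs s
      push_cast
      have : ((∑ i ∈ Finset.range (s + 1), max (u (i + 1) - u i) 0 : ℚ) : ℝ) ≤
          ((∑ i ∈ Finset.range (s + 1), |u (i + 1) - u i| : ℚ) : ℝ) := by exact_mod_cast h1
      push_cast at this h2
      linarith
    · intro s
      have h1 := (hle s).2
      have h2 := habs s
      have : ((∑ i ∈ Finset.range (s + 1), max (u i - u (i + 1)) 0 : ℚ) : ℝ) ≤
          ((∑ i ∈ Finset.range (s + 1), |u (i + 1) - u i| : ℚ) : ℝ) := by exact_mod_cast h1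
      push_cast at this h2 ⊢
      linarith
    · intro s
      have key : ∀ i : ℕ, max (u (i + 1) - u i) 0 - max (u i - u (i + 1)) 0 =
          u (i + 1) - u i := by
        intro i
        rcases le_total (u i) (u (i + 1)) with h | h
        · rw [max_eq_left (by linarith), max_eq_right (by linarith)]; ring
        · rw [max_eq_right (by linarith), max_eq_left (by linarith)]; ring
      have : (∑ i ∈ Finset.range (s + 1), max (u (i + 1) - u i) 0) -
          (∑ i ∈ Finset.range (s + 1), max (u i - u (i + 1)) 0) = u (s + 1) - u 0 := by
        rw [← Finset.sum_sub_distrib]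
        simp_rw [key]
        exact Finset.sum_range_sub (fun i => u i) (s + 1)
      linarith
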